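/- arXiv:2404.19672 — 4 statements merged into one kernel-verified Lean document; each statement's English description precedes it below -/
import Mathlib

section
/- For m ∈ ℝ and σ, η ≥ 0, the 1-Wasserstein distance between the Gaussian measures N(m, σ²) and N(m, η²) on ℝ equals √(2/π) · |σ − η|. -/
open MeasureTheory ProbabilityTheory

open Filter Topology



lemma ioi_int : ∫ x in Set.Ioi (0:ℝ), x * Real.exp (-(x^2/2)) = 1 := by
  have h := integral_Ioi_of_hasDerivAt_of_tendsto' (f := fun x : ℝ => -Real.exp (-(x^2/2)))
    (f' := fun x : ℝ => x * Real.exp (-(x^2/2))) (a := 0)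
    (fun x _ => by
      have : HasDerivAt (fun x : ℝ => -(x^2/2)) (-x) x := by
        simpa using ((hasDerivAt_pow 2 x).div_const 2).fun_neg
      simpa [mul_comm] using (this.exp).fun_neg)
    (by
      have : (fun x : ℝ => x * Real.exp (-(x^2/2))) = fun x => x * Real.exp (-(2⁻¹) * x^2) := by
        funext x; ring_nf
      rw [this]
      exact (integrable_mul_exp_neg_mul_sq (by norm_num)).integrableOn)
    (by
      have : Tendsto (fun x : ℝ => Real.exp (-(x^2/2))) atTop (𝓝 0) := by
        apply Real.tendsto_exp_atBot.comp
        apply tendsto_neg_atTop_atBot.comp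
        exact (tendsto_pow_atTop two_ne_zero).atTop_div_const (by norm_num)
      simpa using this.neg)
  simpa using h

lemma abs_int : ∫ x : ℝ, |x| * Real.exp (-(x^2/2)) = 2 := by
  have h := integral_comp_abs (f := fun y : ℝ => y * Real.exp (-(y^2/2)))
  have e : (fun x : ℝ => |x| * Real.exp (-(x^2/2)))
      = fun x => (fun y : ℝ => y * Real.exp (-(y^2/2))) |x| := by
    funext x; simp [sq_abs]
  rw [e, h, ioi_int]; norm_num

lemma integrable_abs_exp : Integrable (fun x : ℝ => |x| * Real.exp (-(x^2/2))) := by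
  have h := (integrable_mul_exp_neg_mul_sq (b := 2⁻¹) (by norm_num)).abs
  refine h.congr (Filter.Eventually.of_forall fun x => ?_)
  show |x * Real.exp (-2⁻¹ * x^2)| = |x| * Real.exp (-(x^2/2))
  rw [abs_mul, abs_of_pos (Real.exp_pos _)]
  ring_nf

lemma gauss_integral (g : ℝ → ℝ) :
    ∫ x, g x ∂(gaussianReal 0 1) = ∫ x, gaussianPDFReal 0 1 x * g x := by
  rw [gaussianReal_of_var_ne_zero 0 one_ne_zero]
  unfold gaussianPDF
  simp_rw [ENNReal.ofReal]
  rw [integral_withDensity_eq_integral_smul ((measurable_gaussianPDFReal 0 1).real_toNNReal) g]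
  congr 1; funext x
  rw [NNReal.smul_def, Real.coe_toNNReal _ (gaussianPDFReal_nonneg 0 1 x), smul_eq_mul]

lemma pdf_eq (x : ℝ) : gaussianPDFReal 0 1 x
    = (Real.sqrt (2 * Real.pi))⁻¹ * Real.exp (-(x^2/2)) := by
  unfold gaussianPDFReal
  norm_num
  left; ring

lemma sqrt_arith : (Real.sqrt (2 * Real.pi))⁻¹ * 2 = Real.sqrt (2 / Real.pi) := by
  have hπ : (0:ℝ) < Real.sqrt Real.pi := Real.sqrt_pos.mpr Real.pi_pos
  have h2 : (0:ℝ) < Real.sqrt 2 := Real.sqrt_pos.mpr (by norm_num)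
  have m2 : Real.sqrt 2 * Real.sqrt 2 = 2 := Real.mul_self_sqrt (by norm_num)
  rw [Real.sqrt_div (by norm_num : (0:ℝ) ≤ 2), Real.sqrt_mul (by norm_num : (0:ℝ) ≤ 2)]
  field_simp
  nlinarith [m2, hπ, h2]

lemma abs_std : ∫ x, |x| ∂(gaussianReal 0 1) = Real.sqrt (2 / Real.pi) := by
  rw [gauss_integral (fun x => |x|)]
  simp_rw [pdf_eq, mul_assoc, mul_comm (Real.exp _)]
  rw [integral_const_mul, abs_int, sqrt_arith]

lemma integrable_abs_std : Integrable (fun x => |x|) (gaussianReal 0 1) := by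
  rw [gaussianReal_of_var_ne_zero 0 one_ne_zero]
  unfold gaussianPDF
  simp_rw [ENNReal.ofReal]
  rw [integrable_withDensity_iff_integrable_smul ((measurable_gaussianPDFReal 0 1).real_toNNReal)]
  refine (integrable_abs_exp.const_mul ((Real.sqrt (2 * Real.pi))⁻¹)).congr
    (Filter.Eventually.of_forall fun x => ?_)
  show (Real.sqrt (2 * Real.pi))⁻¹ * (|x| * Real.exp (-(x^2/2)))
      = (gaussianPDFReal 0 1 x).toNNReal • |x|
  rw [NNReal.smul_def, Real.coe_toNNReal _ (gaussianPDFReal_nonneg 0 1 x), smul_eq_mul, pdf_eq]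
  ring


lemma gauss_eq_map (m σ : ℝ) :
    gaussianReal m (Real.toNNReal (σ^2)) = (gaussianReal 0 1).map (fun z => m + σ * z) := by
  have h1 : (gaussianReal 0 1).map (fun z => σ * z) = gaussianReal 0 (⟨σ^2, sq_nonneg _⟩ * 1) := by
    have := gaussianReal_map_const_mul (μ := 0) (v := 1) σ
    rw [mul_zero] at this
    exact this
  have h2 : (gaussianReal 0 1).map (fun z => m + σ * z)
      = ((gaussianReal 0 1).map (fun z => σ * z)).map (fun y => m + y) := by
    rw [Measure.map_map (measurable_const_add m) (measurable_const_mul σ)]; rfl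
  rw [h2, h1, gaussianReal_map_const_add]
  congr 1
  · exact (zero_add m).symm
  · apply NNReal.coe_injective
    simp [Real.coe_toNNReal _ (sq_nonneg σ)]
    exact (mul_one (σ ^ 2)).symm

lemma integral_abs_sub (m σ : ℝ) (hσ : 0 ≤ σ) :
    ∫ x, |x - m| ∂(gaussianReal m (Real.toNNReal (σ^2))) = σ * Real.sqrt (2 / Real.pi) := by
  rw [gauss_eq_map m σ, integral_map (by fun_prop) (by apply Measurable.aestronglyMeasurable; measurability)]
  simp_rw [add_sub_cancel_left, abs_mul, abs_of_nonneg hσ]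
  rw [integral_const_mul, abs_std]

lemma integrable_abs_sub (m σ : ℝ) :
    Integrable (fun x => |x - m|) (gaussianReal m (Real.toNNReal (σ^2))) := by
  rw [gauss_eq_map m σ, integrable_map_measure (by apply Measurable.aestronglyMeasurable; measurability) (by fun_prop)]
  refine (integrable_abs_std.const_mul |σ|).congr
    (Filter.Eventually.of_forall fun z => ?_)
  show |σ| * |z| = |m + σ * z - m|
  rw [add_sub_cancel_left, abs_mul]


lemma coupling_marg_fst (m σ η : ℝ) :
    (((gaussianReal 0 1).map (fun z => (m + σ * z, m + η * z))).map Prod.fst)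
      = gaussianReal m (Real.toNNReal (σ^2)) := by
  rw [Measure.map_map measurable_fst (by fun_prop), gauss_eq_map m σ]
  rfl

lemma coupling_marg_snd (m σ η : ℝ) :
    (((gaussianReal 0 1).map (fun z => (m + σ * z, m + η * z))).map Prod.snd)
      = gaussianReal m (Real.toNNReal (η^2)) := by
  rw [Measure.map_map measurable_snd (by fun_prop), gauss_eq_map m η]
  rfl

lemma coupling_int (m σ η : ℝ) :
    ∫ p, |p.1 - p.2| ∂((gaussianReal 0 1).map (fun z => (m + σ * z, m + η * z)))
      = Real.sqrt (2 / Real.pi) * |σ - η| := by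
  rw [integral_map (by fun_prop)
    (by apply Measurable.aestronglyMeasurable; measurability)]
  have : ∀ z : ℝ, |(m + σ * z, m + η * z).1 - (m + σ * z, m + η * z).2| = |σ - η| * |z| := by
    intro z
    rw [← abs_mul]
    congr 1
    ring
  simp_rw [this]
  rw [integral_const_mul, abs_std]
  ring

lemma lower_bound (m σ η : ℝ) (hσ : 0 ≤ σ) (hη : 0 ≤ η) (κ : Measure (ℝ × ℝ))
    [IsProbabilityMeasure κ]
    (h1 : κ.map Prod.fst = gaussianReal m (Real.toNNReal (σ^2)))
    (h2 : κ.map Prod.snd = gaussianReal m (Real.toNNReal (η^2))) :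
    Real.sqrt (2 / Real.pi) * |σ - η| ≤ ∫ p, |p.1 - p.2| ∂κ := by
  have hmf : AEStronglyMeasurable (fun x : ℝ => |x - m|) (κ.map Prod.fst) := by
    apply Measurable.aestronglyMeasurable; measurability
  have hms : AEStronglyMeasurable (fun x : ℝ => |x - m|) (κ.map Prod.snd) := by
    apply Measurable.aestronglyMeasurable; measurability
  have hf : Integrable (fun p : ℝ × ℝ => |p.1 - m|) κ := by
    have h := (integrable_map_measure hmf measurable_fst.aemeasurable).mp
      (h1 ▸ integrable_abs_sub m σ)
    exact h
  have hg : Integrable (fun p : ℝ × ℝ => |p.2 - m|) κ := by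
    have h := (integrable_map_measure hms measurable_snd.aemeasurable).mp
      (h2 ▸ integrable_abs_sub m η)
    exact h
  have hfg : Integrable (fun p : ℝ × ℝ => |p.1 - p.2|) κ := by
    refine (hf.add hg).mono (by apply Measurable.aestronglyMeasurable; measurability) ?_
    filter_upwards with p
    simp only [Pi.add_apply, Real.norm_eq_abs, abs_abs]
    rw [abs_of_nonneg (by positivity : (0:ℝ) ≤ |p.1 - m| + |p.2 - m|)]
    calc |p.1 - p.2| = |(p.1 - m) - (p.2 - m)| := by ring_nf
    _ ≤ |p.1 - m| + |p.2 - m| := abs_sub _ _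
  have e1 : ∫ p, |p.1 - m| ∂κ = σ * Real.sqrt (2 / Real.pi) := by
    have h := integral_map (μ := κ) measurable_fst.aemeasurable hmf
    rw [h1, integral_abs_sub m σ hσ] at h
    exact h.symm
  have e2 : ∫ p, |p.2 - m| ∂κ = η * Real.sqrt (2 / Real.pi) := by
    have h := integral_map (μ := κ) measurable_snd.aemeasurable hms
    rw [h2, integral_abs_sub m η hη] at h
    exact h.symm
  have key : |∫ p, (|p.1 - m| - |p.2 - m|) ∂κ| ≤ ∫ p, |p.1 - p.2| ∂κ := by
    have step1 : |∫ p, (|p.1 - m| - |p.2 - m|) ∂κ| ≤ ∫ p, abs (|p.1 - m| - |p.2 - m|) ∂κ := by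
      simpa [Real.norm_eq_abs] using
        norm_integral_le_integral_norm (μ := κ) (fun p : ℝ × ℝ => |p.1 - m| - |p.2 - m|)
    refine step1.trans (integral_mono (hf.sub hg).abs hfg fun p => ?_)
    have h := abs_abs_sub_abs_le_abs_sub (p.1 - m) (p.2 - m)
    simpa [sub_sub_sub_cancel_right] using h
  rw [integral_sub hf hg, e1, e2, ← sub_mul, abs_mul,
    abs_of_nonneg (Real.sqrt_nonneg _), mul_comm] at key
  exact key


/-- The 1-Wasserstein distance between two probability measures on ℝ,
defined as the infimum over couplings of the expected absolute difference. -/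
noncomputable def wasserstein1 (μ ν : Measure ℝ) : ℝ :=
  ⨅ π : {π : Measure (ℝ × ℝ) //
      IsProbabilityMeasure π ∧ π.map Prod.fst = μ ∧ π.map Prod.snd = ν},
    ∫ p, |p.1 - p.2| ∂(π : Measure (ℝ × ℝ))

theorem wasserstein1_gaussian (m σ η : ℝ) (hσ : 0 ≤ σ) (hη : 0 ≤ η) :
    wasserstein1 (gaussianReal m (Real.toNNReal (σ ^ 2)))
      (gaussianReal m (Real.toNNReal (η ^ 2)))
      = Real.sqrt (2 / Real.pi) * |σ - η| := by
  unfold wasserstein1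
  have hprob : IsProbabilityMeasure
      ((gaussianReal 0 1).map (fun z => (m + σ * z, m + η * z))) :=
    Measure.isProbabilityMeasure_map (by fun_prop)
  set pt : {π : Measure (ℝ × ℝ) //
      IsProbabilityMeasure π ∧ π.map Prod.fst = gaussianReal m (Real.toNNReal (σ ^ 2))
        ∧ π.map Prod.snd = gaussianReal m (Real.toNNReal (η ^ 2))} :=
    ⟨(gaussianReal 0 1).map (fun z => (m + σ * z, m + η * z)),
      hprob, coupling_marg_fst m σ η, coupling_marg_snd m σ η⟩ with hpt
  have hbdd : BddBelow (Set.range fun π : {π : Measure (ℝ × ℝ) //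
      IsProbabilityMeasure π ∧ π.map Prod.fst = gaussianReal m (Real.toNNReal (σ ^ 2))
        ∧ π.map Prod.snd = gaussianReal m (Real.toNNReal (η ^ 2))} =>
      ∫ p, |p.1 - p.2| ∂(π : Measure (ℝ × ℝ))) := by
    refine ⟨Real.sqrt (2 / Real.pi) * |σ - η|, ?_⟩
    rintro x ⟨κ, rfl⟩
    have := κ.2.1
    exact lower_bound m σ η hσ hη κ.1 κ.2.2.1 κ.2.2.2
  have : Nonempty {π : Measure (ℝ × ℝ) //
      IsProbabilityMeasure π ∧ π.map Prod.fst = gaussianReal m (Real.toNNReal (σ ^ 2))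
        ∧ π.map Prod.snd = gaussianReal m (Real.toNNReal (η ^ 2))} := ⟨pt⟩
  refine le_antisymm ?_ ?_
  · exact ciInf_le_of_le hbdd pt (le_of_eq (coupling_int m σ η))
  · refine le_ciInf fun κ => ?_
    have := κ.2.1
    exact lower_bound m σ η hσ hη κ.1 κ.2.2.1 κ.2.2.2
end

section
/- The function σ(t,x) = √(2/(1−t)) · x(1−x) satisfies the nonlinear PDE ∂_t(σ^{1/2}) + (1/2)σ² ∂²ₓₓ(σ^{1/2}) = 0 for all (t,x) ∈ [0,1) × (0,1). -/
noncomputable def sigmaHalf (t x : ℝ) : ℝ := Real.sqrt (2 / (1 - t)) * (x * (1 - x))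

theorem pde_p_half :
    ∀ t ∈ Set.Ico (0 : ℝ) 1, ∀ x ∈ Set.Ioo (0 : ℝ) 1,
      deriv (fun s => sigmaHalf s x ^ ((1 : ℝ) / 2)) t
        + (1 / 2) * (sigmaHalf t x) ^ 2
            * deriv (fun y => deriv (fun z => sigmaHalf t z ^ ((1 : ℝ) / 2)) y) x
        = 0 := by
  intro t ht x hx
  obtain ⟨ht0, ht1⟩ := ht
  obtain ⟨hx0, hx1⟩ := hx
  have h1t : (0:ℝ) < 1 - t := by linarith
  have hcx : (0:ℝ) < x * (1 - x) := by nlinarith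
  simp only [sigmaHalf, ← Real.sqrt_eq_rpow]
  set S : ℝ := Real.sqrt (2 / (1 - t)) with hSdef
  have hS : 0 < S := Real.sqrt_pos.mpr (by positivity)
  have hS2 : S ^ 2 = 2 / (1 - t) := Real.sq_sqrt (by positivity)
  set c : ℝ := x * (1 - x) with hcdef
  set r : ℝ := Real.sqrt (S * c) with hrdef
  have hr : 0 < r := Real.sqrt_pos.mpr (by positivity)
  have hr2 : r ^ 2 = S * c := Real.sq_sqrt (by positivity)
  have hrne : r ≠ 0 := ne_of_gt hr
  have hSne : S ≠ 0 := ne_of_gt hS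
  have h1tne : (1:ℝ) - t ≠ 0 := ne_of_gt h1t
  -- time derivative
  have hu : HasDerivAt (fun s : ℝ => 2 / (1 - s)) (2 / (1 - t) ^ 2) t := by
    have h0 : HasDerivAt (fun s : ℝ => 1 - s) (-1) t := by
      simpa using (hasDerivAt_id t).const_sub 1
    have h1 := (h0.inv (by positivity)).const_mul (2:ℝ)
    have hfe : (fun s : ℝ => 2 * (1 - s)⁻¹) = fun s : ℝ => 2 / (1 - s) := by
      ext s; rw [div_eq_mul_inv]
    simp only [Pi.inv_apply] at h1
    rw [hfe] at h1
    refine h1.congr_deriv ?_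
    field_simp
  have hsqt : HasDerivAt (fun s : ℝ => Real.sqrt (2 / (1 - s)))
      (1 / (2 * S) * (2 / (1 - t) ^ 2)) t :=
    (Real.hasDerivAt_sqrt (x := 2/(1-t)) (by positivity)).comp t hu
  have hT1 : HasDerivAt (fun s : ℝ => Real.sqrt (Real.sqrt (2 / (1 - s)) * c))
      (1 / (2 * r) * (1 / (2 * S) * (2 / (1 - t) ^ 2) * c)) t :=
    (Real.hasDerivAt_sqrt (x := S * c) (by positivity)).comp t (hsqt.mul_const c)
  -- first x-derivative
  have hphi : ∀ y ∈ Set.Ioo (0:ℝ) 1,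
      HasDerivAt (fun z : ℝ => Real.sqrt (S * (z * (1 - z))))
        ((2 * Real.sqrt (S * (y * (1 - y))))⁻¹ * (S * (1 - 2 * y))) y := by
    intro y hy
    have hlin : HasDerivAt (fun z : ℝ => z * (1 - z)) (1 - 2 * y) y := by
      have := (hasDerivAt_id' (𝕜 := ℝ) (x := y)).mul
        ((hasDerivAt_id' (𝕜 := ℝ) (x := y)).const_sub 1)
      refine this.congr_deriv ?_
      ring
    have hin : HasDerivAt (fun z : ℝ => S * (z * (1 - z))) (S * (1 - 2 * y)) y :=
      hlin.const_mul S
    have hypos : (0:ℝ) < y * (1 - y) := by nlinarith [hy.1, hy.2]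
    have hne : S * (y * (1 - y)) ≠ 0 := by positivity
    have := (Real.hasDerivAt_sqrt hne).comp y hin
    refine this.congr_deriv ?_
    rw [one_div]
  have hEq : (fun y : ℝ => deriv (fun z : ℝ => Real.sqrt (S * (z * (1 - z)))) y)
      =ᶠ[nhds x] (fun y : ℝ => (2 * Real.sqrt (S * (y * (1 - y))))⁻¹ * (S * (1 - 2 * y))) := by
    filter_upwards [Ioo_mem_nhds hx0 hx1] with y hy
    exact (hphi y hy).deriv
  have hd2 : deriv (fun y : ℝ => deriv (fun z : ℝ => Real.sqrt (S * (z * (1 - z)))) y) x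
      = deriv (fun y : ℝ => (2 * Real.sqrt (S * (y * (1 - y))))⁻¹ * (S * (1 - 2 * y))) x :=
    hEq.deriv_eq
  -- second x-derivative
  have hlinx : HasDerivAt (fun y : ℝ => y * (1 - y)) (1 - 2 * x) x := by
    have := (hasDerivAt_id' (𝕜 := ℝ) (x := x)).mul
      ((hasDerivAt_id' (𝕜 := ℝ) (x := x)).const_sub 1)
    refine this.congr_deriv ?_
    ring
  have hinx : HasDerivAt (fun y : ℝ => S * (y * (1 - y))) (S * (1 - 2 * x)) x :=
    hlinx.const_mul S
  have hsqx : HasDerivAt (fun y : ℝ => Real.sqrt (S * (y * (1 - y))))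
      (1 / (2 * r) * (S * (1 - 2 * x))) x :=
    (Real.hasDerivAt_sqrt (x := S * c) (by positivity)).comp x hinx
  have hlin2 : HasDerivAt (fun y : ℝ => S * (1 - 2 * y)) (S * (-2)) x := by
    have := (((hasDerivAt_id' (𝕜 := ℝ) (x := x)).const_mul (2:ℝ)).const_sub 1).const_mul S
    refine this.congr_deriv ?_
    ring
  have hT2 : HasDerivAt (fun y : ℝ => (2 * Real.sqrt (S * (y * (1 - y))))⁻¹ * (S * (1 - 2 * y)))
      ((-(2 * (1 / (2 * r) * (S * (1 - 2 * x)))) / (2 * r) ^ 2) * (S * (1 - 2 * x))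
        + (2 * r)⁻¹ * (S * (-2))) x :=
    ((hsqx.const_mul (2:ℝ)).inv (by positivity)).mul hlin2
  rw [hT1.deriv, hd2, hT2.deriv]
  -- algebra
  have h4 : (2:ℝ) / (1 - t) ^ 2 = S ^ 4 / 2 := by
    rw [show (S:ℝ)^4 = (S^2)^2 from by ring, hS2]
    field_simp
  have hcval : c = r ^ 2 / S := by
    field_simp
    linarith [hr2]
  have hkey : S * (1 - 2*x)^2 = S - 4 * r^2 := by
    rw [hr2, hcdef]
    ring
  rw [h4, hcval]
  field_simp
  linear_combination (-(r * S)) * hkey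
end

section
/- The function σ(t,x) = sin(πx)/(π√(1−t)) satisfies ∂_t(log σ) + (1/2)σ² ∂²ₓₓ(log σ) = 0 for all (t,x) ∈ [0,1) × (0,1). -/
noncomputable def sigmaAldous (t x : ℝ) : ℝ :=
  Real.sin (Real.pi * x) / (Real.pi * Real.sqrt (1 - t))

open Real Set Filter

lemma sin_pix_pos {x : ℝ} (hx : x ∈ Ioo (0:ℝ) 1) : 0 < Real.sin (π * x) := by
  apply Real.sin_pos_of_pos_of_lt_pi
  · have := Real.pi_pos
    nlinarith [hx.1]
  · nlinarith [Real.pi_pos, hx.2]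

lemma inner_deriv {t : ℝ} (ht : t < 1) {y : ℝ} (hy : y ∈ Ioo (0:ℝ) 1) :
    deriv (fun z => Real.log (sigmaAldous t z)) y
      = π * Real.cos (π * y) / Real.sin (π * y) := by
  have hs : 0 < Real.sin (π * y) := sin_pix_pos hy
  have hsq : 0 < Real.sqrt (1 - t) := Real.sqrt_pos.mpr (by linarith)
  have heq : (fun z => Real.log (sigmaAldous t z)) =ᶠ[nhds y]
      (fun z => Real.log (Real.sin (π * z)) - Real.log (π * Real.sqrt (1 - t))) := by
    filter_upwards [Ioo_mem_nhds hy.1 hy.2] with z hz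
    unfold sigmaAldous
    rw [Real.log_div (ne_of_gt (sin_pix_pos hz)) (by positivity)]
  rw [heq.deriv_eq]
  have h1 : HasDerivAt (fun z => Real.sin (π * z)) (Real.cos (π * y) * π) y := by
    simpa [Function.comp_def] using (Real.hasDerivAt_sin (π * y)).comp y ((hasDerivAt_id y).const_mul π)
  have h2 : HasDerivAt (fun z => Real.log (Real.sin (π * z)))
      ((Real.sin (π * y))⁻¹ * (Real.cos (π * y) * π)) y :=
    by have := (Real.hasDerivAt_log hs.ne').comp y h1; exact this
  have h3 := h2.sub_const (Real.log (π * Real.sqrt (1 - t)))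
  rw [h3.deriv]
  field_simp

lemma cot_deriv {x : ℝ} (hx : x ∈ Ioo (0:ℝ) 1) :
    HasDerivAt (fun y => π * Real.cos (π * y) / Real.sin (π * y))
      (-(π ^ 2) / (Real.sin (π * x)) ^ 2) x := by
  have hs := sin_pix_pos hx
  have hc : HasDerivAt (fun y => π * Real.cos (π * y)) (π * (-Real.sin (π * x) * π)) x := by
    have := (Real.hasDerivAt_cos (π * x)).comp x ((hasDerivAt_id x).const_mul π)
    simpa [mul_comm, mul_assoc, mul_left_comm] using this.const_mul π
  have hsd : HasDerivAt (fun y => Real.sin (π * y)) (Real.cos (π * x) * π) x := by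
    simpa [Function.comp_def] using (Real.hasDerivAt_sin (π * x)).comp x ((hasDerivAt_id x).const_mul π)
  have hdiv := hc.div hsd hs.ne'
  refine hdiv.congr_deriv ?_
  congr 1
  have hpy : Real.sin (π * x) ^ 2 + Real.cos (π * x) ^ 2 = 1 := Real.sin_sq_add_cos_sq _
  linear_combination (-(π ^ 2)) * hpy

theorem pde_aldous :
    ∀ t ∈ Set.Ico (0 : ℝ) 1, ∀ x ∈ Set.Ioo (0 : ℝ) 1,
      deriv (fun s => Real.log (sigmaAldous s x)) t
        + (1 / 2) * (sigmaAldous t x) ^ 2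
            * deriv (fun y => deriv (fun z => Real.log (sigmaAldous t z)) y) x
        = 0 := by
  intro t ht x hx
  have hsin : 0 < Real.sin (π * x) := sin_pix_pos hx
  have h1t : 0 < 1 - t := by linarith [ht.2]
  have hT : deriv (fun s => Real.log (sigmaAldous s x)) t = 1 / (2 * (1 - t)) := by
    have heq : (fun s => Real.log (sigmaAldous s x)) =ᶠ[nhds t]
        (fun s => Real.log (Real.sin (π * x)) - Real.log π - 1 / 2 * Real.log (1 - s)) := by
      filter_upwards [Iio_mem_nhds (show t < 1 from ht.2)] with s hs
      have h1s : 0 < 1 - s := by simp only [mem_Iio] at hs; linarith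
      unfold sigmaAldous
      rw [Real.log_div hsin.ne' (by positivity),
        Real.log_mul Real.pi_ne_zero (Real.sqrt_pos.mpr h1s).ne', Real.log_sqrt h1s.le]
      ring
    rw [heq.deriv_eq]
    have h1 : HasDerivAt (fun s : ℝ => 1 - s) (-1) t := by
      simpa using (hasDerivAt_id t).const_sub 1
    have h2 : HasDerivAt (fun s => Real.log (1 - s)) ((1 - t)⁻¹ * (-1)) t :=
      (Real.hasDerivAt_log h1t.ne').comp t h1
    have h3 := (h2.const_mul (1 / 2 : ℝ)).const_sub
      (Real.log (Real.sin (π * x)) - Real.log π)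
    have h4 : (fun s => Real.log (Real.sin (π * x)) - Real.log π - 1 / 2 * Real.log (1 - s))
        = fun s => (Real.log (Real.sin (π * x)) - Real.log π) - 1 / 2 * Real.log (1 - s) := rfl
    rw [h4, h3.deriv]
    field_simp
  have hX : deriv (fun y => deriv (fun z => Real.log (sigmaAldous t z)) y) x
      = -(π ^ 2) / (Real.sin (π * x)) ^ 2 := by
    have heq : (fun y => deriv (fun z => Real.log (sigmaAldous t z)) y) =ᶠ[nhds x]
        (fun y => π * Real.cos (π * y) / Real.sin (π * y)) := by
      filter_upwards [Ioo_mem_nhds hx.1 hx.2] with y hy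
      exact inner_deriv ht.2 hy
    rw [heq.deriv_eq, (cot_deriv hx).deriv]
  rw [hT, hX]
  unfold sigmaAldous
  have hsq : Real.sqrt (1 - t) ^ 2 = 1 - t := Real.sq_sqrt h1t.le
  have hpi := Real.pi_pos
  field_simp
  linear_combination hsq
end

section
/- Fix t ≥ 0 and x ∈ ℝ. With f^T(t,x) = √(T/(T−t)) · e^{−x²/(2(T−t))} · e^{−(T²/8)(1/(T−t) − 1/T)} · cosh(xT/(2(T−t))), one has lim_{T→∞} f^T(t,x) = cosh(x/2)·e^{−t/8}. -/
open Filter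

theorem bridge_density_limit (t x : ℝ) (ht : 0 ≤ t) :
    Tendsto (fun T : ℝ =>
        Real.sqrt (T / (T - t)) * Real.exp (-x ^ 2 / (2 * (T - t)))
          * Real.exp (-(T ^ 2 / 8) * (1 / (T - t) - 1 / T))
          * Real.cosh (x * T / (2 * (T - t))))
      atTop (nhds (Real.cosh (x / 2) * Real.exp (-t / 8))) := by
  have hsub : Tendsto (fun T : ℝ => T - t) atTop atTop :=
    tendsto_atTop_add_const_right _ (-t) tendsto_id |>.congr (fun T => by simp [sub_eq_add_neg])
  have hratio : Tendsto (fun T : ℝ => T / (T - t)) atTop (nhds 1) := by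
    have h0 : Tendsto (fun T : ℝ => t / (T - t)) atTop (nhds 0) :=
      tendsto_const_nhds.div_atTop hsub
    have h : Tendsto (fun T : ℝ => 1 + t / (T - t)) atTop (nhds (1 + 0)) :=
      tendsto_const_nhds.add h0
    rw [add_zero] at h
    refine h.congr' ?_
    filter_upwards [hsub.eventually_gt_atTop 0] with T hT
    field_simp
    ring
  have h1 : Tendsto (fun T : ℝ => Real.sqrt (T / (T - t))) atTop (nhds 1) := by
    have := Real.continuous_sqrt.continuousAt.tendsto.comp hratio
    simpa [Function.comp_def] using this
  have h2 : Tendsto (fun T : ℝ => Real.exp (-x ^ 2 / (2 * (T - t)))) atTop (nhds 1) := by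
    have hmul : Tendsto (fun T : ℝ => 2 * (T - t)) atTop atTop := by
      exact Tendsto.const_mul_atTop (by norm_num) hsub
    have hd : Tendsto (fun T : ℝ => -x ^ 2 / (2 * (T - t))) atTop (nhds 0) :=
      tendsto_const_nhds.div_atTop hmul
    simpa [Function.comp_def] using (Real.continuous_exp.continuousAt.tendsto.comp hd)
  have h3 : Tendsto (fun T : ℝ => Real.exp (-(T ^ 2 / 8) * (1 / (T - t) - 1 / T)))
      atTop (nhds (Real.exp (-t / 8))) := by
    have hd : Tendsto (fun T : ℝ => -(T ^ 2 / 8) * (1 / (T - t) - 1 / T)) atTop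
        (nhds (-t / 8)) := by
      have h : Tendsto (fun T : ℝ => (-t / 8) * (T / (T - t))) atTop (nhds ((-t / 8) * 1)) :=
        tendsto_const_nhds.mul hratio
      rw [mul_one] at h
      refine h.congr' ?_
      filter_upwards [hsub.eventually_gt_atTop 0, eventually_gt_atTop (0 : ℝ)] with T hT hT0
      have h1 : T - t ≠ 0 := ne_of_gt hT
      have h2 : T ≠ 0 := ne_of_gt hT0
      field_simp
      ring
    exact Real.continuous_exp.continuousAt.tendsto.comp hd
  have h4 : Tendsto (fun T : ℝ => Real.cosh (x * T / (2 * (T - t)))) atTop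
      (nhds (Real.cosh (x / 2))) := by
    have hd : Tendsto (fun T : ℝ => x * T / (2 * (T - t))) atTop (nhds (x / 2)) := by
      have h : Tendsto (fun T : ℝ => (x / 2) * (T / (T - t))) atTop (nhds ((x / 2) * 1)) :=
        tendsto_const_nhds.mul hratio
      rw [mul_one] at h
      exact h.congr (fun T => div_mul_div_comm x 2 T (T - t))
    exact Real.continuous_cosh.continuousAt.tendsto.comp hd
  have := ((h1.mul h2).mul h3).mul h4
  simpa [mul_comm, mul_assoc, mul_left_comm] using this
end
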